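/- Let n ≥ 2, f > 0, and λ₁ ≥ ... ≥ λₙ with Σᵢ arctan(λᵢ/f) ≥ (n-2)π/2 and λₙ < 0. Then -f/λₙ ≥ Σᵢ₌₁^{n-1} f/λᵢ. -/

import Mathlib

open Real Finset

lemma tan_add_le_aux {a b : ℝ} (ha : 0 ≤ a) (hb : 0 ≤ b) (hab : a + b < Real.pi / 2) :
    Real.tan a + Real.tan b ≤ Real.tan (a + b) := by
  have hpi := Real.pi_pos
  have hca : 0 < Real.cos a := Real.cos_pos_of_mem_Ioo ⟨by linarith, by linarith⟩
  have hcb : 0 < Real.cos b := Real.cos_pos_of_mem_Ioo ⟨by linarith, by linarith⟩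
  have hcab : 0 < Real.cos (a + b) := Real.cos_pos_of_mem_Ioo ⟨by linarith, hab⟩
  have hsa : 0 ≤ Real.sin a := Real.sin_nonneg_of_nonneg_of_le_pi ha (by linarith)
  have hsb : 0 ≤ Real.sin b := Real.sin_nonneg_of_nonneg_of_le_pi hb (by linarith)
  rw [Real.tan_eq_sin_div_cos, Real.tan_eq_sin_div_cos, Real.tan_eq_sin_div_cos,
    div_add_div _ _ hca.ne' hcb.ne', div_le_div_iff₀ (by positivity) hcab]
  rw [Real.sin_add, Real.cos_add]
  nlinarith [mul_nonneg hsa hsb, mul_nonneg (mul_nonneg hsa hcb.le) (mul_nonneg hsa hsb),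
    mul_nonneg (mul_nonneg hsb hca.le) (mul_nonneg hsa hsb)]

lemma tan_sum_le {ι : Type*} (s : Finset ι) (g : ι → ℝ) (h0 : ∀ i ∈ s, 0 ≤ g i)
    (hs : ∑ i ∈ s, g i < Real.pi / 2) :
    ∑ i ∈ s, Real.tan (g i) ≤ Real.tan (∑ i ∈ s, g i) := by
  induction s using Finset.cons_induction with
  | empty => simp
  | cons a s has ih =>
    rw [Finset.sum_cons, Finset.sum_cons] at *
    have hT : 0 ≤ ∑ i ∈ s, g i := Finset.sum_nonneg fun i hi => h0 i (Finset.mem_cons_of_mem hi)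
    have hga : 0 ≤ g a := h0 a (Finset.mem_cons_self a s)
    calc Real.tan (g a) + ∑ i ∈ s, Real.tan (g i)
        ≤ Real.tan (g a) + Real.tan (∑ i ∈ s, g i) := by
          have := ih (fun i hi => h0 i (Finset.mem_cons_of_mem hi)) (by linarith)
          linarith
      _ ≤ Real.tan (g a + ∑ i ∈ s, g i) := tan_add_le_aux hga hT hs

theorem stmt_17 (n : ℕ) (hn : 2 ≤ n) (f : ℝ) (hf : 0 < f)
    (lam : Fin n → ℝ) (hmono : Antitone lam)
    (hsum : ((n : ℝ) - 2) * Real.pi / 2 ≤ ∑ i, Real.arctan (lam i / f))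
    (hneg : lam ⟨n - 1, by omega⟩ < 0) :
    ∑ i ∈ Finset.univ.filter (fun i : Fin n => (i : ℕ) < n - 1), f / lam i ≤
      -f / lam ⟨n - 1, by omega⟩ := by
  have hpi := Real.pi_pos
  set k : Fin n := ⟨n - 1, by omega⟩ with hk
  set S : Finset (Fin n) := Finset.univ.filter (fun i : Fin n => (i : ℕ) < n - 1) with hS
  set θ : Fin n → ℝ := fun i => Real.arctan (lam i / f) with hθ
  -- split the sum
  have hcompl : Finset.univ.filter (fun i : Fin n => ¬ (i : ℕ) < n - 1) = {k} := by
    ext i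
    simp only [Finset.mem_filter, Finset.mem_univ, true_and, Finset.mem_singleton, not_lt]
    have hkv : (k : ℕ) = n - 1 := rfl
    constructor
    · intro h; exact Fin.ext (by omega)
    · intro h; subst h; omega
  have hsplit : (∑ i, θ i) = (∑ i ∈ S, θ i) + θ k := by
    rw [← Finset.sum_filter_add_sum_filter_not Finset.univ (fun i : Fin n => (i : ℕ) < n - 1),
      hcompl, Finset.sum_singleton]
  have hcard : (S.card : ℝ) = (n : ℝ) - 1 := by
    have h1 : S.card + ({k} : Finset (Fin n)).card = n := by
      rw [← hcompl, Finset.card_filter_add_card_filter_not]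
      simp
    have : S.card = n - 1 := by simp at h1; omega
    rw [this]
    push_cast [Nat.cast_sub (by omega : 1 ≤ n)]
    ring
  -- θ k < 0
  have hθk_neg : θ k < 0 := by
    have : Real.arctan (lam k / f) < Real.arctan 0 :=
      Real.arctan_strictMono (by exact div_neg_of_neg_of_pos hneg hf)
    rw [Real.arctan_zero] at this; exact this
  have hθlt : ∀ i, θ i < Real.pi / 2 := fun i => Real.arctan_lt_pi_div_two _
  -- key sum inequality
  have hkey : ∑ i ∈ S, (Real.pi / 2 - θ i) ≤ Real.pi / 2 + θ k := by
    rw [Finset.sum_sub_distrib, Finset.sum_const, nsmul_eq_mul]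
    rw [hsplit] at hsum
    rw [hcard]
    linarith
  have hterm_pos : ∀ i ∈ S, 0 < Real.pi / 2 - θ i := fun i _ => by linarith [hθlt i]
  have hsum_lt : ∑ i ∈ S, (Real.pi / 2 - θ i) < Real.pi / 2 := by linarith
  -- each θ i > 0 for i ∈ S
  have hθpos : ∀ i ∈ S, 0 < θ i := by
    intro i hi
    have hle : Real.pi / 2 - θ i ≤ ∑ j ∈ S, (Real.pi / 2 - θ j) :=
      Finset.single_le_sum (fun j hj => (hterm_pos j hj).le) hi
    linarith
  have hlam_pos : ∀ i ∈ S, 0 < lam i := by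
    intro i hi
    have h1 : Real.arctan 0 < Real.arctan (lam i / f) := by rw [Real.arctan_zero]; exact hθpos i hi
    have h2 : (0 : ℝ) < lam i / f := by
      by_contra h
      exact absurd (Real.arctan_strictMono.le_iff_le.mpr (not_lt.mp h)) (not_le.mpr h1)
    exact (div_pos_iff.mp h2).resolve_right (fun ⟨_, hf'⟩ => absurd hf hf'.not_gt) |>.1
  -- tan values
  have htan : ∀ i ∈ S, Real.tan (Real.pi / 2 - θ i) = f / lam i := by
    intro i hi
    rw [hθ, Real.tan_pi_div_two_sub, Real.tan_arctan, inv_div]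
  have htank : Real.tan (Real.pi / 2 + θ k) = -f / lam k := by
    have : Real.pi / 2 + θ k = Real.pi / 2 - (-θ k) := by ring
    rw [this, Real.tan_pi_div_two_sub, hθ]
    rw [show -Real.arctan (lam k / f) = Real.arctan (-(lam k / f)) by rw [Real.arctan_neg],
      Real.tan_arctan]
    rw [inv_neg, inv_div]; ring
  -- chain
  have step1 : ∑ i ∈ S, Real.tan (Real.pi / 2 - θ i) ≤
      Real.tan (∑ i ∈ S, (Real.pi / 2 - θ i)) :=
    tan_sum_le S _ (fun i hi => (hterm_pos i hi).le) hsum_lt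
  have step2 : Real.tan (∑ i ∈ S, (Real.pi / 2 - θ i)) ≤ Real.tan (Real.pi / 2 + θ k) := by
    have hSnonneg : 0 ≤ ∑ i ∈ S, (Real.pi / 2 - θ i) :=
      Finset.sum_nonneg fun i hi => (hterm_pos i hi).le
    exact Real.strictMonoOn_tan.monotoneOn
      ⟨by linarith, hsum_lt⟩ ⟨by linarith [hθlt k], by linarith⟩ hkey
  calc ∑ i ∈ S, f / lam i = ∑ i ∈ S, Real.tan (Real.pi / 2 - θ i) :=
        (Finset.sum_congr rfl htan).symm
    _ ≤ Real.tan (Real.pi / 2 + θ k) := le_trans step1 step2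
    _ = -f / lam k := htank
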